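/- Let a, b, c ∈ ℂ with b² ≠ 4, and let x ∈ ℂ satisfy x⁴ + bx² + 1 = 0 (so that the point [x:0:1] lies on the curve C_{a,b,c}). Then H_F(x,0,1) = 0 if and only if ax² + c = 0. -/

import Mathlib

/-- The Kuribayashi quartic `F(x,y,z) = x⁴+y⁴+z⁴+a x²y² + b x²z² + c y²z²`. -/
noncomputable def F (a b c x y z : ℂ) : ℂ :=
  x ^ 4 + y ^ 4 + z ^ 4 + a * x ^ 2 * y ^ 2 + b * x ^ 2 * z ^ 2 + c * y ^ 2 * z ^ 2

/-- The Hessian determinant of the Kuribayashi quartic: the determinant of the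
3×3 matrix of second partial derivatives of `F`. -/
noncomputable def HF (a b c x y z : ℂ) : ℂ :=
  Matrix.det
    !![12 * x ^ 2 + 2 * a * y ^ 2 + 2 * b * z ^ 2, 4 * a * x * y, 4 * b * x * z;
       4 * a * x * y, 12 * y ^ 2 + 2 * a * x ^ 2 + 2 * c * z ^ 2, 4 * c * y * z;
       4 * b * x * z, 4 * c * y * z, 12 * z ^ 2 + 2 * b * x ^ 2 + 2 * c * y ^ 2]

/-- For a point `[x:0:1]` on the Kuribayashi quartic (with `b² ≠ 4`), the Hessian vanishes
there iff `a x² + c = 0`. -/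
theorem hessian_zero_iff_on_y_eq_zero (a b c x : ℂ) (hb : b ^ 2 ≠ 4)
    (hx : x ^ 4 + b * x ^ 2 + 1 = 0) :
    HF a b c x 0 1 = 0 ↔ a * x ^ 2 + c = 0 := by
  have hx0 : x ≠ 0 := by
    rintro rfl; simp at hx
  have key : HF a b c x 0 1 = (a * x ^ 2 + c) * (72 * (4 - b ^ 2) * x ^ 2) := by
    rw [HF, Matrix.det_fin_three]
    norm_num [Matrix.cons_val_zero, Matrix.cons_val_one, Matrix.cons_val_two, Matrix.tail_cons, Matrix.head_cons]
    linear_combination (48 * b * (a * x ^ 2 + c)) * hx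
  rw [key, mul_eq_zero]
  constructor
  · rintro (h | h)
    · exact h
    · exfalso
      have : (4 : ℂ) - b ^ 2 ≠ 0 := fun h' => hb (by linear_combination -h')
      simp [this, hx0] at h
  · exact fun h => Or.inl h
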